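/- Second moment bound for the normalized LQG measure: for γ < √2, there is a constant C = C(γ) such that for every integer m and every box B of side length 2^m in ℤ_n², the normalized mass η̃_n(B) = η_n(B)/E[η_n(B)] satisfies E[η̃_n(B)²] ≤ C·max(2^{−γ² m}, 1), where η_n(B) = ∑_{y∈B} e^{γ φ_n(y)} and φ_n is the white-noise regularized GFF at scale 2^{−n}. -/

import Mathlib

open MeasureTheory Finset

/-- Position in `ℝ²` of the point of the rescaled lattice
`ℤ_n² = 2^{-n} ζ^{-1} ℤ²` indexed by `q ∈ ℤ²`. -/
noncomputable def latticePos (n ζ : ℕ) (q : ℤ × ℤ) : ℝ × ℝ :=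
  ((q.1 : ℝ) * ((2 : ℝ) ^ (-(n : ℤ)) / (ζ : ℝ)),
   (q.2 : ℝ) * ((2 : ℝ) ^ (-(n : ℤ)) / (ζ : ℝ)))

/-- Euclidean distance between two points of the rescaled lattice. -/
noncomputable def latticeDist (n ζ : ℕ) (q q' : ℤ × ℤ) : ℝ :=
  Real.sqrt (((latticePos n ζ q).1 - (latticePos n ζ q').1) ^ 2 +
    ((latticePos n ζ q).2 - (latticePos n ζ q').2) ^ 2)

set_option maxHeartbeats 1000000

noncomputable def fker (α : ℝ) (δ : ℤ) : ℝ := ((max |δ| 1 : ℤ) : ℝ) ^ (-α)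

variable {α : ℝ}


/-- Bernoulli-type: t^p ≤ p t + (1-p) for t ≥ 0, p ∈ [0,1]. -/
lemma bern (hp0 : 0 ≤ α) (hp1 : α ≤ 1) {t : ℝ} (ht : 0 ≤ t) :
    t ^ α ≤ α * t + (1 - α) := by
  have := Real.geom_mean_le_arith_mean2_weighted hp0 (by linarith) ht zero_le_one
    (by ring : α + (1 - α) = 1)
  simpa using this

lemma key_step (hp0 : 0 < α) (hp1 : α < 1) {x : ℝ} (hx : 1 ≤ x) :
    (1 - α) * x ^ (-α) ≤ x ^ (1 - α) - (x - 1) ^ (1 - α) := by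
  have hx0 : (0:ℝ) < x := lt_of_lt_of_le one_pos hx
  have ht0 : 0 ≤ (x - 1) / x := div_nonneg (by linarith) hx0.le
  have h := bern (α := 1 - α) (by linarith) (by linarith) ht0
  have hdiv : ((x - 1) / x) ^ (1 - α) = (x - 1) ^ (1 - α) / x ^ (1 - α) :=
    Real.div_rpow (by linarith : (0:ℝ) ≤ x - 1) hx0.le _
  rw [hdiv] at h
  have hxp : (0:ℝ) < x ^ (1 - α) := Real.rpow_pos_of_pos hx0 _
  have h2 : (x - 1) ^ (1 - α) ≤ ((1 - α) * ((x - 1) / x) + (1 - (1 - α))) * x ^ (1 - α) := by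
    rw [div_le_iff₀ hxp] at h; linarith
  have h3 : ((1 - α) * ((x - 1) / x) + (1 - (1 - α))) * x ^ (1 - α)
      = x ^ (1 - α) - (1 - α) * (x ^ (1 - α) / x) := by
    field_simp; ring
  have h4 : x ^ (1 - α) / x = x ^ (-α) := by
    rw [show x ^ (1-α) / x = x ^ (1-α) / x ^ (1:ℝ) by rw [Real.rpow_one],
      ← Real.rpow_sub hx0]
    norm_num
  rw [h3] at h2
  rw [← h4]; linarith

lemma sum_rpow_le (hp0 : 0 < α) (hp1 : α < 1) (M : ℕ) :
    ∑ k ∈ Finset.Icc 1 M, ((k : ℝ)) ^ (-α) ≤ (M : ℝ) ^ (1 - α) / (1 - α) := by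
  induction M with
  | zero => simp [Real.zero_rpow (by linarith : (1:ℝ) - α ≠ 0)]
  | succ M ih =>
      rw [← Finset.insert_Icc_right_eq_Icc_add_one (by omega), Finset.sum_insert (by simp)]
      have hk := key_step hp0 hp1 (x := (M : ℝ) + 1) (by norm_num [Nat.cast_nonneg] : (1:ℝ) ≤ (M:ℝ)+1)
      have h1a : (0:ℝ) < 1 - α := by linarith
      have : ((M:ℝ) + 1) ^ (-α) ≤ (((M:ℝ)+1) ^ (1-α) - (M:ℝ) ^ (1-α)) / (1 - α) := by
        rw [le_div_iff₀ h1a]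
        have : ((M:ℝ) + 1) - 1 = (M:ℝ) := by ring
        rw [this] at hk; linarith
      push_cast
      calc ((M:ℝ) + 1) ^ (-α) + ∑ k ∈ Finset.Icc 1 M, ((k : ℝ)) ^ (-α)
          ≤ (((M:ℝ)+1) ^ (1-α) - (M:ℝ) ^ (1-α)) / (1 - α) + (M : ℝ) ^ (1 - α) / (1 - α) := by
            exact add_le_add this ih
        _ = ((M:ℝ)+1) ^ (1-α) / (1 - α) := by ring

lemma fker_nonneg (α : ℝ) (δ : ℤ) : 0 ≤ fker α δ := by
  unfold fker
  apply Real.rpow_nonneg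
  positivity

lemma fker_zero (α : ℝ) : fker α 0 = 1 := by simp [fker]

lemma fker_of_pos {δ : ℤ} (hδ : 1 ≤ δ) : fker α δ = ((δ:ℝ)) ^ (-α) := by
  unfold fker
  rw [abs_of_pos (by omega), max_eq_left hδ]

lemma sum_Icc_int_rpow (hα0 : 0 < α) (hα1 : α < 1) (D : ℤ) (hD : 0 ≤ D) :
    ∑ δ ∈ Finset.Icc (1:ℤ) D, ((δ:ℝ)) ^ (-α) ≤ (D:ℝ) ^ (1-α) / (1-α) := by
  have h1 : ∑ δ ∈ Finset.Icc (1:ℤ) D, ((δ:ℝ)) ^ (-α)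
      = ∑ k ∈ Finset.Icc 1 D.toNat, ((k:ℝ)) ^ (-α) := by
    refine Finset.sum_nbij' (fun δ : ℤ => δ.toNat) (fun k : ℕ => (k:ℤ)) ?_ ?_ ?_ ?_ ?_ <;>
        intro a ha <;> beta_reduce <;> simp only [Finset.mem_Icc] at * <;> try omega
    congr 1
    norm_cast
    omega
  have h2 : ((D:ℝ)) = ((D.toNat : ℕ) : ℝ) := by norm_cast; omega
  rw [h1, h2]
  exact sum_rpow_le hα0 hα1 D.toNat

lemma sum_fker_sym (hα0 : 0 < α) (hα1 : α < 1) (D : ℤ) (hD : 0 ≤ D) :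
    ∑ δ ∈ Finset.Icc (-D) D, fker α δ ≤ 1 + 2 * ((D:ℝ) ^ (1-α) / (1-α)) := by
  have e1 : Finset.Icc (-D) D = Finset.Icc (-D) (-1) ∪ Finset.Icc 0 D := by
    ext x; simp only [Finset.mem_Icc, Finset.mem_union]; omega
  have hdisj : Disjoint (Finset.Icc (-D) (-1)) (Finset.Icc (0:ℤ) D) := by
    rw [Finset.disjoint_left]
    intro x hx hx'
    simp only [Finset.mem_Icc] at hx hx'; omega
  have e2 : Finset.Icc (0:ℤ) D = insert 0 (Finset.Icc 1 D) := by
    ext x; simp only [Finset.mem_Icc, Finset.mem_insert]; omega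
  have e3 : Finset.Icc (-D) (-1) = (Finset.Icc (1:ℤ) D).image (fun δ => -δ) := by
    ext x
    simp only [Finset.mem_Icc, Finset.mem_image]
    constructor
    · intro h; exact ⟨-x, by omega, by omega⟩
    · rintro ⟨y, hy, rfl⟩; omega
  have e4 : ∑ δ ∈ Finset.Icc (-D) (-1), fker α δ = ∑ δ ∈ Finset.Icc (1:ℤ) D, fker α δ := by
    rw [e3, Finset.sum_image (by intro x _ y _ h; have h' : -x = -y := h; omega)]
    apply Finset.sum_congr rfl
    intro x _; unfold fker; rw [abs_neg]
  have e5 : ∑ δ ∈ Finset.Icc (1:ℤ) D, fker α δ ≤ (D:ℝ) ^ (1-α) / (1-α) := by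
    rw [show ∑ δ ∈ Finset.Icc (1:ℤ) D, fker α δ = ∑ δ ∈ Finset.Icc (1:ℤ) D, ((δ:ℝ)) ^ (-α) from
      Finset.sum_congr rfl fun x hx => fker_of_pos (Finset.mem_Icc.mp hx).1]
    exact sum_Icc_int_rpow hα0 hα1 D hD
  rw [e1, Finset.sum_union hdisj, e2, Finset.sum_insert (by simp), e4, fker_zero]
  linarith

lemma double_sum_fker (hα0 : 0 < α) (hα1 : α < 1) (c d : ℤ) :
    ∑ j ∈ Finset.Icc c d, ∑ j' ∈ Finset.Icc c d, fker α (j - j')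
      ≤ (1 + 2/(1-α)) * ((Finset.Icc c d).card : ℝ) ^ ((2:ℝ)-α) := by
  rcases le_or_gt c d with hcd | hcd
  · set N : ℕ := (Finset.Icc c d).card with hN
    have hNcard : (N : ℤ) = d - c + 1 := by rw [hN, Int.card_Icc]; omega
    have hN1 : 1 ≤ N := by omega
    have hNpos : (0:ℝ) < (N:ℝ) := by exact_mod_cast hN1
    have inner : ∀ j ∈ Finset.Icc c d,
        ∑ j' ∈ Finset.Icc c d, fker α (j - j') ≤ (1 + 2/(1-α)) * ((N:ℝ)) ^ ((1:ℝ)-α) := by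
      intro j hj
      rw [Finset.mem_Icc] at hj
      have step1 : ∑ j' ∈ Finset.Icc c d, fker α (j - j')
          = ∑ δ ∈ Finset.Icc (j - d) (j - c), fker α δ := by
        apply Finset.sum_nbij' (fun j' => j - j') (fun δ => j - δ) <;>
          simp [Finset.mem_Icc] <;> omega
      have step2 : ∑ δ ∈ Finset.Icc (j - d) (j - c), fker α δ
          ≤ ∑ δ ∈ Finset.Icc (-(d - c)) (d - c), fker α δ := by
        apply Finset.sum_le_sum_of_subset_of_nonneg
        · apply Finset.Icc_subset_Icc <;> omega
        · intro i _ _; exact fker_nonneg α i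
      have step3 := sum_fker_sym hα0 hα1 (d - c) (by omega)
      have hDN : ((d - c : ℤ) : ℝ) ≤ (N:ℝ) := by
        have : (d - c : ℤ) ≤ (N : ℤ) := by omega
        exact_mod_cast this
      have hD0 : (0:ℝ) ≤ ((d - c : ℤ) : ℝ) := by
        have : (0:ℤ) ≤ d - c := by omega
        exact_mod_cast this
      have hmono : ((d - c : ℤ):ℝ) ^ (1-α) ≤ (N:ℝ) ^ ((1:ℝ)-α) :=
        Real.rpow_le_rpow hD0 hDN (by linarith)
      have hone : (1:ℝ) ≤ (N:ℝ) ^ ((1:ℝ)-α) :=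
        Real.one_le_rpow (by exact_mod_cast hN1) (by linarith)
      have h1α : (0:ℝ) < 1 - α := by linarith
      calc ∑ j' ∈ Finset.Icc c d, fker α (j - j')
          = ∑ δ ∈ Finset.Icc (j - d) (j - c), fker α δ := step1
        _ ≤ ∑ δ ∈ Finset.Icc (-(d - c)) (d - c), fker α δ := step2
        _ ≤ 1 + 2 * (((d - c : ℤ):ℝ) ^ (1-α) / (1-α)) := step3
        _ ≤ (1 + 2/(1-α)) * ((N:ℝ)) ^ ((1:ℝ)-α) := by
            have hd : ((d - c : ℤ):ℝ) ^ (1-α) / (1-α) ≤ (N:ℝ) ^ ((1:ℝ)-α) / (1-α) :=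
              div_le_div_of_nonneg_right hmono h1α.le
            have e : (1 + 2/(1-α)) * ((N:ℝ)) ^ ((1:ℝ)-α)
                = (N:ℝ) ^ ((1:ℝ)-α) + 2 * ((N:ℝ) ^ ((1:ℝ)-α) / (1-α)) := by ring
            rw [e]
            linarith
    calc ∑ j ∈ Finset.Icc c d, ∑ j' ∈ Finset.Icc c d, fker α (j - j')
        ≤ ∑ _j ∈ Finset.Icc c d, (1 + 2/(1-α)) * ((N:ℝ)) ^ ((1:ℝ)-α) :=
          Finset.sum_le_sum inner
      _ = (N:ℝ) * ((1 + 2/(1-α)) * ((N:ℝ)) ^ ((1:ℝ)-α)) := by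
          rw [Finset.sum_const, ← hN, nsmul_eq_mul]
      _ = (1 + 2/(1-α)) * ((N:ℝ) ^ (1:ℝ) * ((N:ℝ)) ^ ((1:ℝ)-α)) := by
          rw [Real.rpow_one]; ring
      _ = (1 + 2/(1-α)) * ((N:ℝ)) ^ ((2:ℝ)-α) := by
          rw [← Real.rpow_add hNpos, show (1:ℝ) + (1 - α) = 2 - α by ring]
  · rw [Finset.Icc_eq_empty (by omega : ¬ c ≤ d)]
    have : ((0:ℝ)) ^ ((2:ℝ)-α) = 0 := Real.zero_rpow (by linarith)
    simp [this]


lemma sum_prod_factor (I₁ I₂ : Finset ℤ) (g h : ℤ → ℝ) :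
    ∑ p ∈ (I₁ ×ˢ I₂) ×ˢ (I₁ ×ˢ I₂), g (p.1.1 - p.2.1) * h (p.1.2 - p.2.2)
      = (∑ j ∈ I₁, ∑ j' ∈ I₁, g (j - j')) * (∑ k ∈ I₂, ∑ k' ∈ I₂, h (k - k')) := by
  rw [Finset.sum_product]
  simp only [Finset.sum_product]
  rw [Finset.sum_mul]
  apply Finset.sum_congr rfl
  intro j _
  rw [Finset.sum_mul, Finset.sum_comm]
  apply Finset.sum_congr rfl
  intro k _
  rw [Finset.mul_sum]
  apply Finset.sum_congr rfl
  intro x _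
  rw [Finset.mul_sum]


lemma int_max_sq (A Bb : ℤ) (hA : 0 ≤ A) (hB : 0 ≤ Bb) (h : 1 ≤ A + Bb) :
    max A 1 * max Bb 1 ≤ A^2 + Bb^2 := by
  rcases eq_or_lt_of_le hA with h1 | h1
  · rw [max_eq_right (by omega), ← h1, max_eq_left (by omega)]
    nlinarith
  · rcases eq_or_lt_of_le hB with h2 | h2
    · rw [max_eq_left (by omega), ← h2, max_eq_right (by omega)]
      nlinarith
    · rw [max_eq_left (by omega), max_eq_left (by omega)]
      nlinarith

lemma rpow_neg_sq {x α γ : ℝ} (hx : 0 ≤ x) (hγα : γ^2 = 2*α) :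
    x ^ (-(γ^2)) = (x^2) ^ (-α) := by
  rw [← Real.rpow_natCast x 2, ← Real.rpow_mul hx]
  congr 1
  push_cast
  linarith

lemma dist_rpow_bound (γ α : ℝ) (hα0 : 0 < α) (hγα : γ^2 = 2*α) (n ζ : ℕ) (hζ : 0 < ζ)
    (q q' : ℤ × ℤ) (hne : q ≠ q') :
    (latticeDist n ζ q q') ^ (-(γ^2)) ≤
      ((2 : ℝ) ^ (-(n : ℤ)) / (ζ : ℝ)) ^ (-(γ^2)) *
        fker α (q.1 - q'.1) * fker α (q.2 - q'.2) := by
  set ε : ℝ := (2 : ℝ) ^ (-(n : ℤ)) / (ζ : ℝ) with hε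
  have hε0 : 0 < ε := by
    apply div_pos (zpow_pos (by norm_num) _)
    exact_mod_cast hζ
  have hΔ : 1 ≤ |q.1 - q'.1| + |q.2 - q'.2| := by
    have : q.1 ≠ q'.1 ∨ q.2 ≠ q'.2 := by
      by_contra h
      push_neg at h
      exact hne (Prod.ext h.1 h.2)
    rcases this with h | h
    · have h1 := abs_pos.mpr (sub_ne_zero.mpr h)
      have h2 := abs_nonneg (q.2 - q'.2)
      omega
    · have h1 := abs_pos.mpr (sub_ne_zero.mpr h)
      have h2 := abs_nonneg (q.1 - q'.1)
      omega
  have hm : (max |q.1 - q'.1| 1 * max |q.2 - q'.2| 1 : ℤ)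
      ≤ (q.1 - q'.1)^2 + (q.2 - q'.2)^2 := by
    have := int_max_sq |q.1 - q'.1| |q.2 - q'.2| (abs_nonneg _) (abs_nonneg _) hΔ
    simpa [sq_abs] using this
  have hm₁R : (1:ℝ) ≤ ((max |q.1 - q'.1| 1 : ℤ) : ℝ) := by
    exact_mod_cast le_max_right |q.1 - q'.1| 1
  have hm₂R : (1:ℝ) ≤ ((max |q.2 - q'.2| 1 : ℤ) : ℝ) := by
    exact_mod_cast le_max_right |q.2 - q'.2| 1
  set S : ℝ := ((latticePos n ζ q).1 - (latticePos n ζ q').1) ^ 2 +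
    ((latticePos n ζ q).2 - (latticePos n ζ q').2) ^ 2 with hS
  have hSe : S = ε^2 * (((q.1 - q'.1 : ℤ):ℝ)^2 + ((q.2 - q'.2 : ℤ):ℝ)^2) := by
    simp only [hS, latticePos, hε]
    push_cast
    ring
  have hSlb : ε^2 * (((max |q.1 - q'.1| 1 : ℤ):ℝ) * ((max |q.2 - q'.2| 1 : ℤ):ℝ)) ≤ S := by
    rw [hSe]
    have h1 : ((max |q.1 - q'.1| 1 : ℤ):ℝ) * ((max |q.2 - q'.2| 1 : ℤ):ℝ)
        ≤ ((q.1 - q'.1 : ℤ):ℝ)^2 + ((q.2 - q'.2 : ℤ):ℝ)^2 := by exact_mod_cast hm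
    nlinarith [sq_nonneg ε]
  have hprodpos : (0:ℝ) < ε^2 * (((max |q.1 - q'.1| 1 : ℤ):ℝ) * ((max |q.2 - q'.2| 1 : ℤ):ℝ)) :=
    mul_pos (pow_pos hε0 2) (mul_pos (by linarith) (by linarith))
  have hd2 : (latticeDist n ζ q q')^2 = S := Real.sq_sqrt (by positivity)
  have hd0 : 0 ≤ latticeDist n ζ q q' := Real.sqrt_nonneg _
  calc (latticeDist n ζ q q') ^ (-(γ^2))
      = ((latticeDist n ζ q q') ^ 2) ^ (-α) := rpow_neg_sq hd0 hγα
    _ = S ^ (-α) := by rw [hd2]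
    _ ≤ (ε^2 * (((max |q.1 - q'.1| 1 : ℤ):ℝ) * ((max |q.2 - q'.2| 1 : ℤ):ℝ))) ^ (-α) :=
        Real.rpow_le_rpow_of_nonpos hprodpos hSlb (by linarith)
    _ = (ε^2) ^ (-α) * (((max |q.1 - q'.1| 1 : ℤ):ℝ) ^ (-α) * ((max |q.2 - q'.2| 1 : ℤ):ℝ) ^ (-α)) := by
        rw [Real.mul_rpow (by positivity) (by positivity),
          Real.mul_rpow (by linarith) (by linarith)]
    _ = ε ^ (-(γ^2)) * fker α (q.1 - q'.1) * fker α (q.2 - q'.2) := by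
        rw [← rpow_neg_sq hε0.le hγα]
        unfold fker
        ring

lemma abs_sum_ne {q q' : ℤ × ℤ} (hne : q ≠ q') : 1 ≤ |q.1 - q'.1| + |q.2 - q'.2| := by
  have : q.1 ≠ q'.1 ∨ q.2 ≠ q'.2 := by
    by_contra h
    push_neg at h
    exact hne (Prod.ext h.1 h.2)
  rcases this with h | h
  · have h1 := abs_pos.mpr (sub_ne_zero.mpr h)
    have h2 := abs_nonneg (q.2 - q'.2)
    omega
  · have h1 := abs_pos.mpr (sub_ne_zero.mpr h)
    have h2 := abs_nonneg (q.1 - q'.1)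
    omega

lemma latticeDist_pos (n ζ : ℕ) (hζ : 0 < ζ) {q q' : ℤ × ℤ} (hne : q ≠ q') :
    0 < latticeDist n ζ q q' := by
  have hε0 : (0:ℝ) < (2 : ℝ) ^ (-(n : ℤ)) / (ζ : ℝ) := by
    apply div_pos (zpow_pos (by norm_num) _)
    exact_mod_cast hζ
  apply Real.sqrt_pos.mpr
  have hΔ := abs_sum_ne hne
  have h1 : (1:ℝ) ≤ ((q.1 - q'.1 : ℤ):ℝ)^2 + ((q.2 - q'.2 : ℤ):ℝ)^2 := by
    have : (1:ℤ) ≤ (q.1 - q'.1)^2 + (q.2 - q'.2)^2 := by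
      rcases (by omega : 1 ≤ |q.1 - q'.1| ∨ 1 ≤ |q.2 - q'.2|) with h | h
      · nlinarith [sq_abs (q.1 - q'.1), sq_nonneg (q.2 - q'.2)]
      · nlinarith [sq_abs (q.2 - q'.2), sq_nonneg (q.1 - q'.1)]
    exact_mod_cast this
  have he : ((latticePos n ζ q).1 - (latticePos n ζ q').1) ^ 2 +
      ((latticePos n ζ q).2 - (latticePos n ζ q').2) ^ 2
      = ((2 : ℝ) ^ (-(n : ℤ)) / (ζ : ℝ))^2 * (((q.1 - q'.1 : ℤ):ℝ)^2 + ((q.2 - q'.2 : ℤ):ℝ)^2) := by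
    simp only [latticePos]
    push_cast
    ring
  rw [he]
  nlinarith [sq_nonneg ((2 : ℝ) ^ (-(n : ℤ)) / (ζ : ℝ))]

lemma term_bound (γ α : ℝ) (hα0 : 0 < α) (hγα : γ^2 = 2*α) (n ζ : ℕ) (hζ : 0 < ζ)
    (K : (ℤ × ℤ) → (ℤ × ℤ) → ℝ)
    (hKdiag : ∀ q : ℤ × ℤ, K q q = (n : ℝ) * Real.log 2)
    (hKoff : ∀ q q' : ℤ × ℤ, q ≠ q' →
      K q q' ≤ max (-Real.log (latticeDist n ζ q q') + 1) 1)
    (q q' : ℤ × ℤ) :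
    Real.exp (γ^2 * K q q') ≤ Real.exp (γ^2) *
      (((2 : ℝ) ^ (-(n : ℤ)) / (ζ : ℝ)) ^ (-(γ^2)) *
        (fker α (q.1 - q'.1) * fker α (q.2 - q'.2)) + 1) := by
  set ε : ℝ := (2 : ℝ) ^ (-(n : ℤ)) / (ζ : ℝ) with hεdef
  have hε0 : 0 < ε := by
    apply div_pos (zpow_pos (by norm_num) _)
    exact_mod_cast hζ
  have hγ2 : (0:ℝ) ≤ γ^2 := sq_nonneg γ
  have hexp1 : (1:ℝ) ≤ Real.exp (γ^2) := Real.one_le_exp hγ2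
  have hεrp : (0:ℝ) ≤ ε ^ (-(γ^2)) := Real.rpow_nonneg hε0.le _
  by_cases hqq : q = q'
  · subst hqq
    rw [hKdiag q]
    simp only [sub_self]
    rw [fker]
    simp only [abs_zero, max_eq_right (by norm_num : (0:ℤ) ≤ 1)]
    -- fker α 0 = 1
    have hf0 : ((1:ℤ):ℝ) ^ (-α) = 1 := by norm_num
    rw [hf0]
    have hεle : ε ≤ (2:ℝ) ^ (-(n:ℤ)) := by
      rw [hεdef]
      apply div_le_self (le_of_lt (zpow_pos (by norm_num) _))
      exact_mod_cast hζ
    have h1 : Real.exp (γ^2 * ((n:ℝ) * Real.log 2)) ≤ ε ^ (-(γ^2)) := by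
      have h2 : ((2:ℝ) ^ (-(n:ℤ))) ^ (-(γ^2)) ≤ ε ^ (-(γ^2)) :=
        Real.rpow_le_rpow_of_nonpos hε0 hεle (by linarith)
      have h3 : ((2:ℝ) ^ (-(n:ℤ))) ^ (-(γ^2)) = Real.exp (γ^2 * ((n:ℝ) * Real.log 2)) := by
        rw [show ((2:ℝ) ^ (-(n:ℤ))) = (2:ℝ) ^ ((-(n:ℤ) : ℤ):ℝ) from (Real.rpow_intCast 2 _).symm,
          ← Real.rpow_mul (by norm_num), Real.rpow_def_of_pos (by norm_num)]
        congr 1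
        push_cast
        ring
      linarith
    calc Real.exp (γ^2 * ((n:ℝ) * Real.log 2)) ≤ ε ^ (-(γ^2)) := h1
      _ ≤ ε ^ (-(γ^2)) * (1 * 1) + 1 := by linarith
      _ ≤ Real.exp (γ^2) * (ε ^ (-(γ^2)) * (1 * 1) + 1) := by nlinarith
  · have hd0 : 0 < latticeDist n ζ q q' := latticeDist_pos n ζ hζ hqq
    have hK := hKoff q q' hqq
    have hmax : max (-Real.log (latticeDist n ζ q q') + 1) 1
        = max (-Real.log (latticeDist n ζ q q')) 0 + 1 := by
      rw [← max_add_add_right]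
      norm_num
    have step : Real.exp (γ^2 * max (-Real.log (latticeDist n ζ q q')) 0)
        ≤ ε ^ (-(γ^2)) * (fker α (q.1 - q'.1) * fker α (q.2 - q'.2)) + 1 := by
      by_cases hd1 : 1 ≤ latticeDist n ζ q q'
      · rw [max_eq_right (by linarith [Real.log_nonneg hd1]), mul_zero, Real.exp_zero]
        have hff : 0 ≤ fker α (q.1 - q'.1) * fker α (q.2 - q'.2) := by
          unfold fker
          positivity
        nlinarith
      · push_neg at hd1
        have hlog : Real.log (latticeDist n ζ q q') < 0 := Real.log_neg hd0 hd1
        rw [max_eq_left (by linarith)]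
        have : Real.exp (γ^2 * -Real.log (latticeDist n ζ q q'))
            = (latticeDist n ζ q q') ^ (-(γ^2)) := by
          rw [Real.rpow_def_of_pos hd0]
          congr 1
          ring
        rw [this]
        have := dist_rpow_bound γ α hα0 hγα n ζ hζ q q' hqq
        have h1 : (latticeDist n ζ q q') ^ (-(γ^2))
            ≤ ε ^ (-(γ^2)) * (fker α (q.1 - q'.1) * fker α (q.2 - q'.2)) := by
          rw [← mul_assoc]
          exact this
        linarith
    calc Real.exp (γ^2 * K q q')
        ≤ Real.exp (γ^2 * (max (-Real.log (latticeDist n ζ q q')) 0 + 1)) := by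
          rw [← hmax]
          exact Real.exp_le_exp.mpr (mul_le_mul_of_nonneg_left hK hγ2)
      _ = Real.exp (γ^2) * Real.exp (γ^2 * max (-Real.log (latticeDist n ζ q q')) 0) := by
          rw [← Real.exp_add]
          congr 1
          ring
      _ ≤ Real.exp (γ^2) *
          (ε ^ (-(γ^2)) * (fker α (q.1 - q'.1) * fker α (q.2 - q'.2)) + 1) := by
          apply mul_le_mul_of_nonneg_left step (Real.exp_nonneg _)

/-- **Second moment bound for the normalized LQG measure**: for `0 < γ < √2`
there is a constant `C = C(γ)` such that for every integer `m` and every box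
`B` of side length `2^m` in `ℤ_n²`, the mass `η_n(B) = ∑_{y ∈ B} e^{γ φ_n(y)}`
of the regularized GFF `φ_n` (a centered Gaussian field with pointwise variance
`n log 2` and covariance `K` bounded by `max(−log|y−y'| + 1, 1)` off the
diagonal) satisfies `E[η̃_n(B)²] ≤ C · max(2^{−γ² m}, 1)`, where
`η̃_n(B) = η_n(B) / E[η_n(B)]` and `E[η_n(B)] = 2^{γ² n/2} |B|`. -/
theorem normalized_LQG_second_moment (γ : ℝ) (hγ0 : 0 < γ) (hγ : γ < Real.sqrt 2) :
    ∃ C : ℝ, 0 < C ∧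
      ∀ (n ζ : ℕ), 0 < ζ →
      ∀ (m : ℤ) (a : ℝ × ℝ) (B : Finset (ℤ × ℤ)),
        (∀ q : ℤ × ℤ, q ∈ B ↔
          ((latticePos n ζ q).1 ∈ Set.Icc a.1 (a.1 + (2 : ℝ) ^ m) ∧
           (latticePos n ζ q).2 ∈ Set.Icc a.2 (a.2 + (2 : ℝ) ^ m))) →
      ∀ (Ω : Type) (_ : MeasurableSpace Ω) (μ : Measure Ω), IsProbabilityMeasure μ →
      ∀ (φ : Ω → (ℤ × ℤ) → ℝ) (K : (ℤ × ℤ) → (ℤ × ℤ) → ℝ),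
        (∀ q : ℤ × ℤ, Measurable fun ω => φ ω q) →
        (∀ q : ℤ × ℤ, K q q = (n : ℝ) * Real.log 2) →
        (∀ q q' : ℤ × ℤ, q ≠ q' →
          K q q' ≤ max (-Real.log (latticeDist n ζ q q') + 1) 1) →
        (∀ q ∈ B, ∀ q' ∈ B,
          ∫ ω, Real.exp (γ * (φ ω q + φ ω q')) ∂μ
            = Real.exp ((γ ^ 2 / 2) * (2 * (n : ℝ) * Real.log 2 + 2 * K q q'))) →
        ∫ ω, (∑ q ∈ B, Real.exp (γ * φ ω q)) ^ 2 ∂μ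
          ≤ C * max ((2 : ℝ) ^ (-(γ ^ 2) * (m : ℝ))) 1 *
              ((2 : ℝ) ^ (γ ^ 2 * (n : ℝ) / 2) * (B.card : ℝ)) ^ 2 := by
  have hγsq : 0 < γ^2 := pow_pos hγ0 2
  have hγ2lt : γ^2 < 2 := by
    nlinarith [Real.sq_sqrt (show (0:ℝ) ≤ 2 by norm_num), Real.sqrt_nonneg 2]
  obtain ⟨α, hαdef⟩ : ∃ α : ℝ, α = γ^2/2 := ⟨_, rfl⟩
  have hα0 : 0 < α := by rw [hαdef]; linarith
  have hα1 : α < 1 := by rw [hαdef]; linarith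
  have hγα : γ^2 = 2*α := by rw [hαdef]; ring
  obtain ⟨cα, hcαdef⟩ : ∃ c : ℝ, c = 1 + 2/(1-α) := ⟨_, rfl⟩
  have hcα1 : 1 ≤ cα := by
    rw [hcαdef]
    have : 0 < 2/(1-α) := div_pos two_pos (by linarith)
    linarith
  refine ⟨Real.exp (γ^2) * (4*cα^2 + 1), mul_pos (Real.exp_pos _) (by positivity), ?_⟩
  intro n ζ hζ m a B hB Ω mΩ μ hμ φ K hφm hKdiag hKoff hint
  obtain ⟨ε, hεdef⟩ : ∃ e : ℝ, e = (2 : ℝ) ^ (-(n : ℤ)) / (ζ : ℝ) := ⟨_, rfl⟩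
  have hε0 : 0 < ε := by
    rw [hεdef]
    apply div_pos (zpow_pos (by norm_num) _)
    exact_mod_cast hζ
  obtain ⟨L, hLdef⟩ : ∃ l : ℝ, l = (2 : ℝ) ^ m := ⟨_, rfl⟩
  have hL0 : 0 < L := hLdef ▸ zpow_pos (by norm_num) m
  -- box structure
  obtain ⟨c₁, hc₁⟩ : ∃ c : ℤ, c = ⌈a.1/ε⌉ := ⟨_, rfl⟩
  obtain ⟨d₁, hd₁⟩ : ∃ c : ℤ, c = ⌊(a.1+L)/ε⌋ := ⟨_, rfl⟩
  obtain ⟨c₂, hc₂⟩ : ∃ c : ℤ, c = ⌈a.2/ε⌉ := ⟨_, rfl⟩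
  obtain ⟨d₂, hd₂⟩ : ∃ c : ℤ, c = ⌊(a.2+L)/ε⌋ := ⟨_, rfl⟩
  have hiff : ∀ (x : ℤ) (b : ℝ), (b ≤ (x:ℝ)*ε ∧ (x:ℝ)*ε ≤ b + L) ↔ (⌈b/ε⌉ ≤ x ∧ (x:ℤ) ≤ ⌊(b+L)/ε⌋) := by
    intro x b
    rw [Int.ceil_le, Int.le_floor, div_le_iff₀ hε0, le_div_iff₀ hε0]
  have hBeq : B = Finset.Icc c₁ d₁ ×ˢ Finset.Icc c₂ d₂ := by
    ext q
    rw [hB q, Finset.mem_product, Finset.mem_Icc, Finset.mem_Icc,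
      hc₁, hd₁, hc₂, hd₂]
    simp only [latticePos, Set.mem_Icc, ← hεdef, ← hLdef]
    rw [← hiff q.1 a.1, ← hiff q.2 a.2]
  by_cases hBne : B = ∅
  · rw [hBne]
    simp only [Finset.sum_empty, Finset.card_empty, Nat.cast_zero, mul_zero]
    rw [show ((0:ℝ))^2 = 0 by norm_num]
    rw [MeasureTheory.integral_zero]
    simp
  · -- B nonempty
    have hBnty : B.Nonempty := Finset.nonempty_iff_ne_empty.mpr hBne
    have hIne : (Finset.Icc c₁ d₁).Nonempty ∧ (Finset.Icc c₂ d₂).Nonempty := by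
      obtain ⟨q, hq⟩ := hBnty
      rw [hBeq, Finset.mem_product] at hq
      exact ⟨⟨q.1, hq.1⟩, ⟨q.2, hq.2⟩⟩
    have hcd₁ : c₁ ≤ d₁ := by
      obtain ⟨x, hx⟩ := hIne.1
      rw [Finset.mem_Icc] at hx
      omega
    have hcd₂ : c₂ ≤ d₂ := by
      obtain ⟨x, hx⟩ := hIne.2
      rw [Finset.mem_Icc] at hx
      omega
    obtain ⟨N₁, hN₁def⟩ : ∃ N : ℕ, N = (Finset.Icc c₁ d₁).card := ⟨_, rfl⟩
    obtain ⟨N₂, hN₂def⟩ : ∃ N : ℕ, N = (Finset.Icc c₂ d₂).card := ⟨_, rfl⟩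
    have hN₁c : (N₁:ℤ) = d₁ - c₁ + 1 := by rw [hN₁def, Int.card_Icc]; omega
    have hN₂c : (N₂:ℤ) = d₂ - c₂ + 1 := by rw [hN₂def, Int.card_Icc]; omega
    have hN₁R1 : (1:ℝ) ≤ (N₁:ℝ) := by
      have : (1:ℤ) ≤ (N₁:ℤ) := by omega
      exact_mod_cast this
    have hN₂R1 : (1:ℝ) ≤ (N₂:ℝ) := by
      have : (1:ℤ) ≤ (N₂:ℤ) := by omega
      exact_mod_cast this
    have hcard : (B.card : ℝ) = (N₁:ℝ) * (N₂:ℝ) := by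
      rw [hBeq, Finset.card_product, hN₁def, hN₂def]
      push_cast
      ring
    -- lower bound on N_i
    have hεN : ∀ (b : ℝ) (cc dd : ℤ) (NN : ℕ), cc = ⌈b/ε⌉ → dd = ⌊(b+L)/ε⌋ →
        (NN:ℤ) = dd - cc + 1 → (1:ℝ) ≤ NN → L/2 ≤ ε*(NN:ℝ) := by
      intro b cc dd NN hcc hdd hNN hNN1
      have h1 : ((b+L)/ε) - 1 < (dd:ℝ) := by rw [hdd]; exact Int.sub_one_lt_floor _
      have h2 : (cc:ℝ) < b/ε + 1 := by rw [hcc]; exact Int.ceil_lt_add_one _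
      have h3 : (NN:ℝ) = (dd:ℝ) - cc + 1 := by exact_mod_cast hNN
      have hadd : (b+L)/ε = b/ε + L/ε := add_div _ _ _
      have h4 : L/ε - 1 < (NN:ℝ) := by
        rw [h3]
        rw [hadd] at h1
        linarith
      have h5 : L/ε ≤ 2*(NN:ℝ) := by linarith
      have h6 := mul_le_mul_of_nonneg_right h5 hε0.le
      rw [div_mul_cancel₀ _ (ne_of_gt hε0)] at h6
      linarith
    have hεN₁ : L/2 ≤ ε*(N₁:ℝ) := hεN a.1 c₁ d₁ N₁ hc₁ hd₁ hN₁c hN₁R1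
    have hεN₂ : L/2 ≤ ε*(N₂:ℝ) := hεN a.2 c₂ d₂ N₂ hc₂ hd₂ hN₂c hN₂R1
    -- integrability and expansion
    have hInt : ∀ p ∈ B ×ˢ B, Integrable (fun ω => Real.exp (γ * (φ ω p.1 + φ ω p.2))) μ := by
      intro p hp
      rw [Finset.mem_product] at hp
      by_contra h
      have h0 := hint p.1 hp.1 p.2 hp.2
      rw [MeasureTheory.integral_undef h] at h0
      exact (Real.exp_pos _).ne' h0.symm
    have hpt : ∀ ω, (∑ q ∈ B, Real.exp (γ * φ ω q))^2
        = ∑ p ∈ B ×ˢ B, Real.exp (γ * (φ ω p.1 + φ ω p.2)) := by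
      intro ω
      rw [sq, Finset.sum_mul_sum]
      rw [← Finset.sum_product']
      apply Finset.sum_congr rfl
      intro p _
      rw [← Real.exp_add, ← mul_add]
    have hIeq : ∫ ω, (∑ q ∈ B, Real.exp (γ * φ ω q))^2 ∂μ
        = ∑ p ∈ B ×ˢ B, Real.exp ((γ^2/2) * (2*(n:ℝ)*Real.log 2 + 2 * K p.1 p.2)) := by
      simp only [hpt]
      rw [MeasureTheory.integral_finset_sum _ hInt]
      apply Finset.sum_congr rfl
      intro p hp
      rw [Finset.mem_product] at hp
      exact hint p.1 hp.1 p.2 hp.2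
    obtain ⟨A, hAdef⟩ : ∃ A : ℝ, A = Real.exp (γ^2 * ((n:ℝ) * Real.log 2)) := ⟨_, rfl⟩
    have hA0 : 0 < A := hAdef ▸ Real.exp_pos _
    have hterm2 : ∀ p ∈ B ×ˢ B, Real.exp ((γ^2/2) * (2*(n:ℝ)*Real.log 2 + 2*K p.1 p.2))
        ≤ A * (Real.exp (γ^2) * (ε^(-(γ^2)) * (fker α (p.1.1-p.2.1) * fker α (p.1.2-p.2.2)) + 1)) := by
      intro p hp
      have h1 : (γ^2/2) * (2*(n:ℝ)*Real.log 2 + 2*K p.1 p.2)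
          = γ^2*((n:ℝ)*Real.log 2) + γ^2 * K p.1 p.2 := by ring
      rw [h1, Real.exp_add, hAdef]
      apply mul_le_mul_of_nonneg_left _ (Real.exp_nonneg _)
      have := term_bound γ α hα0 hγα n ζ hζ K hKdiag hKoff p.1 p.2
      rw [← hεdef] at this
      exact this
    -- summation of the bound
    obtain ⟨T₁, hT₁def⟩ : ∃ T : ℝ, T = ∑ j ∈ Finset.Icc c₁ d₁, ∑ j' ∈ Finset.Icc c₁ d₁, fker α (j - j') := ⟨_, rfl⟩
    obtain ⟨T₂, hT₂def⟩ : ∃ T : ℝ, T = ∑ j ∈ Finset.Icc c₂ d₂, ∑ j' ∈ Finset.Icc c₂ d₂, fker α (j - j') := ⟨_, rfl⟩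
    have hT₁0 : 0 ≤ T₁ := by
      rw [hT₁def]
      apply Finset.sum_nonneg
      intro i _
      exact Finset.sum_nonneg fun j _ => Real.rpow_nonneg (by positivity) _
    have hT₂0 : 0 ≤ T₂ := by
      rw [hT₂def]
      apply Finset.sum_nonneg
      intro i _
      exact Finset.sum_nonneg fun j _ => Real.rpow_nonneg (by positivity) _
    have hT₁ : T₁ ≤ cα * ((N₁:ℝ)) ^ ((2:ℝ)-α) := by
      rw [hT₁def, hcαdef, hN₁def]
      exact double_sum_fker hα0 hα1 c₁ d₁
    have hT₂ : T₂ ≤ cα * ((N₂:ℝ)) ^ ((2:ℝ)-α) := by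
      rw [hT₂def, hcαdef, hN₂def]
      exact double_sum_fker hα0 hα1 c₂ d₂
    have hsumf : ∑ p ∈ B ×ˢ B, (fker α (p.1.1-p.2.1) * fker α (p.1.2-p.2.2)) = T₁ * T₂ := by
      rw [hBeq, hT₁def, hT₂def]
      exact sum_prod_factor _ _ _ _
    obtain ⟨E, hEdef⟩ : ∃ E : ℝ, E = Real.exp (γ^2) := ⟨_, rfl⟩
    have hE1 : 1 ≤ E := hEdef ▸ Real.one_le_exp (sq_nonneg γ)
    have hεγ0 : 0 ≤ ε ^ (-(γ^2)) := Real.rpow_nonneg hε0.le _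
    have hsum2 : ∑ p ∈ B ×ˢ B, (A * (E * (ε^(-(γ^2)) * (fker α (p.1.1-p.2.1) * fker α (p.1.2-p.2.2)) + 1)))
        = A * E * (ε^(-(γ^2)) * (T₁ * T₂)) + A * E * ((N₁:ℝ)*(N₂:ℝ))^2 := by
      have e1 : ∀ p : (ℤ×ℤ)×(ℤ×ℤ), A * (E * (ε^(-(γ^2)) * (fker α (p.1.1-p.2.1) * fker α (p.1.2-p.2.2)) + 1))
          = A * E * ε^(-(γ^2)) * (fker α (p.1.1-p.2.1) * fker α (p.1.2-p.2.2)) + A * E := by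
        intro p
        ring
      rw [Finset.sum_congr rfl (fun p _ => e1 p), Finset.sum_add_distrib, ← Finset.mul_sum,
        hsumf, Finset.sum_const, nsmul_eq_mul, Finset.card_product]
      have e2 : ((B.card * B.card : ℕ) : ℝ) = ((N₁:ℝ)*(N₂:ℝ))^2 := by
        push_cast
        rw [hcard]
        ring
      rw [e2]
      ring
    -- the RHS
    obtain ⟨M, hMdef⟩ : ∃ M : ℝ, M = max ((2 : ℝ) ^ (-(γ ^ 2) * (m : ℝ))) 1 := ⟨_, rfl⟩
    have hM1 : 1 ≤ M := hMdef ▸ le_max_right _ _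
    have hTA : ((2 : ℝ) ^ (γ ^ 2 * (n : ℝ) / 2))^2 = A := by
      rw [sq, ← Real.rpow_add (by norm_num), hAdef, Real.rpow_def_of_pos (by norm_num)]
      congr 1
      ring
    -- key numeric bound
    have hP0 : (0:ℝ) < (N₁:ℝ)*(N₂:ℝ) :=
      mul_pos (lt_of_lt_of_le one_pos hN₁R1) (lt_of_lt_of_le one_pos hN₂R1)
    have hkey : ε^(-(γ^2)) * (((N₁:ℝ)*(N₂:ℝ)) ^ (-α)) ≤ 4 * M := by
      have h1 : ε^(-(γ^2)) * (((N₁:ℝ)*(N₂:ℝ)) ^ (-α)) = (ε^2 * ((N₁:ℝ)*(N₂:ℝ))) ^ (-α) := by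
        rw [rpow_neg_sq hε0.le hγα, ← Real.mul_rpow (by positivity) hP0.le]
      have hLL : (0:ℝ) < (L/2)^2 := by positivity
      have h2 : (L/2)^2 ≤ ε^2 * ((N₁:ℝ)*(N₂:ℝ)) := by
        have hb := mul_le_mul hεN₁ hεN₂ (by positivity) (by positivity)
        calc (L/2)^2 = (L/2)*(L/2) := sq (L/2)
          _ ≤ (ε*(N₁:ℝ))*(ε*(N₂:ℝ)) := hb
          _ = ε^2 * ((N₁:ℝ)*(N₂:ℝ)) := by ring
      have h3 : (ε^2 * ((N₁:ℝ)*(N₂:ℝ))) ^ (-α) ≤ ((L/2)^2) ^ (-α) :=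
        Real.rpow_le_rpow_of_nonpos hLL h2 (by linarith)
      have h4 : ((L/2)^2) ^ (-α) = (L/2) ^ (-(γ^2)) := (rpow_neg_sq (by positivity) hγα).symm
      have h5 : (L/2) ^ (-(γ^2)) = L ^ (-(γ^2)) * (2:ℝ) ^ (γ^2) := by
        rw [Real.div_rpow hL0.le (by norm_num), Real.rpow_neg (by norm_num : (0:ℝ) ≤ 2),
          div_eq_mul_inv, inv_inv]
      have h6 : (2:ℝ) ^ (γ^2) ≤ 4 := by
        calc (2:ℝ) ^ (γ^2) ≤ (2:ℝ) ^ ((2:ℕ):ℝ) :=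
              Real.rpow_le_rpow_of_exponent_le (by norm_num) (by push_cast; linarith)
          _ = 4 := by rw [Real.rpow_natCast]; norm_num
      have h7 : L ^ (-(γ^2)) ≤ M := by
        rw [hMdef, hLdef]
        have e : ((2:ℝ) ^ m) ^ (-(γ^2)) = (2:ℝ) ^ (-(γ ^ 2) * (m : ℝ)) := by
          rw [show ((2:ℝ) ^ m) = (2:ℝ) ^ ((m:ℤ):ℝ) from (Real.rpow_intCast 2 m).symm,
            ← Real.rpow_mul (by norm_num)]
          congr 1
          ring
        rw [e]
        exact le_max_left _ _
      have hLγ0 : 0 ≤ L ^ (-(γ^2)) := Real.rpow_nonneg hL0.le _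
      calc ε^(-(γ^2)) * (((N₁:ℝ)*(N₂:ℝ)) ^ (-α)) = (ε^2 * ((N₁:ℝ)*(N₂:ℝ))) ^ (-α) := h1
        _ ≤ ((L/2)^2) ^ (-α) := h3
        _ = L ^ (-(γ^2)) * (2:ℝ) ^ (γ^2) := by rw [h4, h5]
        _ ≤ M * 4 := mul_le_mul h7 h6 (by positivity) (by linarith)
        _ = 4 * M := by ring
    -- assemble
    have hsplit : (((N₁:ℝ)*(N₂:ℝ))) ^ ((2:ℝ)-α) = ((N₁:ℝ)*(N₂:ℝ))^2 * (((N₁:ℝ)*(N₂:ℝ)) ^ (-α)) := by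
      rw [show ((2:ℝ)-α) = ((2:ℕ):ℝ) + (-α) by push_cast; ring, Real.rpow_add hP0,
        Real.rpow_natCast]
    have hmulrp : ((N₁:ℝ)) ^ ((2:ℝ)-α) * ((N₂:ℝ)) ^ ((2:ℝ)-α) = (((N₁:ℝ)*(N₂:ℝ))) ^ ((2:ℝ)-α) :=
      (Real.mul_rpow (by linarith) (by linarith)).symm
    have hT₁T₂ : T₁ * T₂ ≤ cα^2 * (((N₁:ℝ)*(N₂:ℝ))) ^ ((2:ℝ)-α) := by
      calc T₁ * T₂ ≤ (cα * ((N₁:ℝ)) ^ ((2:ℝ)-α)) * (cα * ((N₂:ℝ)) ^ ((2:ℝ)-α)) := by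
            apply mul_le_mul hT₁ hT₂ hT₂0
              (mul_nonneg (by linarith) (Real.rpow_nonneg (by linarith) _))
        _ = cα^2 * (((N₁:ℝ)) ^ ((2:ℝ)-α) * ((N₂:ℝ)) ^ ((2:ℝ)-α)) := by ring
        _ = cα^2 * (((N₁:ℝ)*(N₂:ℝ))) ^ ((2:ℝ)-α) := by rw [hmulrp]
    have hfinal : A * E * (ε^(-(γ^2)) * (T₁ * T₂)) + A * E * ((N₁:ℝ)*(N₂:ℝ))^2
        ≤ E * (4*cα^2 + 1) * M * (A * ((N₁:ℝ)*(N₂:ℝ))^2) := by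
      have hQ : ε^(-(γ^2)) * (T₁ * T₂) ≤ 4 * M * cα^2 * ((N₁:ℝ)*(N₂:ℝ))^2 := by
        calc ε^(-(γ^2)) * (T₁ * T₂) ≤ ε^(-(γ^2)) * (cα^2 * (((N₁:ℝ)*(N₂:ℝ))) ^ ((2:ℝ)-α)) :=
              mul_le_mul_of_nonneg_left hT₁T₂ hεγ0
          _ = cα^2 * (((N₁:ℝ)*(N₂:ℝ))^2 * (ε^(-(γ^2)) * (((N₁:ℝ)*(N₂:ℝ)) ^ (-α)))) := by
              rw [hsplit]; ring
          _ ≤ cα^2 * (((N₁:ℝ)*(N₂:ℝ))^2 * (4 * M)) := by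
              apply mul_le_mul_of_nonneg_left _ (by positivity)
              exact mul_le_mul_of_nonneg_left hkey (by positivity)
          _ = 4 * M * cα^2 * ((N₁:ℝ)*(N₂:ℝ))^2 := by ring
      have hAE : 0 < A * E := mul_pos hA0 (lt_of_lt_of_le one_pos hE1)
      have hx1 : A * E * (ε^(-(γ^2)) * (T₁ * T₂)) ≤ A * E * (4 * M * cα^2 * ((N₁:ℝ)*(N₂:ℝ))^2) := by
        exact mul_le_mul_of_nonneg_left hQ hAE.le
      have hx2 : A * E * ((N₁:ℝ)*(N₂:ℝ))^2 ≤ A * E * (M * ((N₁:ℝ)*(N₂:ℝ))^2) := by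
        apply mul_le_mul_of_nonneg_left _ hAE.le
        exact le_mul_of_one_le_left (sq_nonneg _) hM1
      have hr : E * (4*cα^2 + 1) * M * (A * ((N₁:ℝ)*(N₂:ℝ))^2)
          = A * E * (4 * M * cα^2 * ((N₁:ℝ)*(N₂:ℝ))^2) + A * E * (M * ((N₁:ℝ)*(N₂:ℝ))^2) := by
        ring
      rw [hr]
      have hass : A * E * (ε^(-(γ^2)) * (T₁ * T₂)) = A * E * (ε^(-(γ^2)) * (T₁ * T₂)) := rfl
      linarith
    calc ∫ ω, (∑ q ∈ B, Real.exp (γ * φ ω q))^2 ∂μ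
        = ∑ p ∈ B ×ˢ B, Real.exp ((γ^2/2) * (2*(n:ℝ)*Real.log 2 + 2 * K p.1 p.2)) := hIeq
      _ ≤ ∑ p ∈ B ×ˢ B, (A * (E * (ε^(-(γ^2)) * (fker α (p.1.1-p.2.1) * fker α (p.1.2-p.2.2)) + 1))) := by
          apply Finset.sum_le_sum
          intro p hp
          rw [hEdef]
          exact hterm2 p hp
      _ = A * E * (ε^(-(γ^2)) * (T₁ * T₂)) + A * E * ((N₁:ℝ)*(N₂:ℝ))^2 := hsum2
      _ ≤ E * (4*cα^2 + 1) * M * (A * ((N₁:ℝ)*(N₂:ℝ))^2) := hfinal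
      _ = Real.exp (γ^2) * (4*cα^2 + 1) * max ((2 : ℝ) ^ (-(γ ^ 2) * (m : ℝ))) 1 *
            (((2 : ℝ) ^ (γ ^ 2 * (n : ℝ) / 2)) * (B.card : ℝ))^2 := by
          have e : (((2:ℝ) ^ (γ^2*(n:ℝ)/2)) * (B.card:ℝ))^2 = A * ((N₁:ℝ)*(N₂:ℝ))^2 := by
            rw [mul_pow, hTA, hcard]
          rw [← hEdef, ← hMdef, e]
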